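/- Let G be the group with generators α_{n+1},…,α_{2n} and relations: for each pair n+1 ≤ p < q ≤ 2n, α_p α_q α_p^{-1} α_q^{-1} = 1 if c_{p-n,q-n} = 0, and α_p α_q^{-1} α_p^{-1} α_q^{-1} = 1 if c_{p-n,q-n} = 1, where c : Fin n × Fin n → ZMod 2 is any function. Then G is abelian if and only if c_{i,j} = 0 for all i < j. -/

import Mathlib

/-- The relator set for the presentation of the fundamental group of a real
Bott tower: for each pair `p < q`, the relator is the commutator
`α_p α_q α_p⁻¹ α_q⁻¹` if `c (p,q) = 0`, and `α_p α_q⁻¹ α_p⁻¹ α_q⁻¹` if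
`c (p,q) = 1`. -/
def bottRels (n : ℕ) (c : Fin n × Fin n → ZMod 2) : Set (FreeGroup (Fin n)) :=
  {w | ∃ p q : Fin n, p < q ∧
    w = (if c (p, q) = 0 then
          FreeGroup.of p * FreeGroup.of q * (FreeGroup.of p)⁻¹ * (FreeGroup.of q)⁻¹
        else
          FreeGroup.of p * (FreeGroup.of q)⁻¹ * (FreeGroup.of p)⁻¹ * (FreeGroup.of q)⁻¹)}

theorem stmt_0 (n : ℕ) (hn : 1 ≤ n) (c : Fin n × Fin n → ZMod 2) :
    (∀ a b : PresentedGroup (bottRels n c), a * b = b * a) ↔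
      (∀ i j : Fin n, i < j → c (i, j) = 0) := by
  constructor
  · intro hab i j hij
    by_contra hc0
    have key : ∀ x : ZMod 2, x ≠ 0 → x = 1 := by decide
    obtain ⟨q, hqS, hqmax⟩ := Set.Finite.exists_maximalFor id
      {q : Fin n | ∃ p, p < q ∧ c (p, q) = 1} (Set.toFinite _) ⟨j, i, hij, key _ hc0⟩
    obtain ⟨p, hpq, hcpq⟩ := hqS
    set f : Fin n → DihedralGroup 0 := fun k =>
      if k = q then .r 1 else if k < q ∧ c (k, q) = 1 then .sr 0 else 1 with hf
    have hfq : f q = .r 1 := by simp [hf]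
    have hfp : f p = .sr 0 := by
      simp only [hf, if_neg hpq.ne]
      exact if_pos ⟨hpq, hcpq⟩
    have hrel : ∀ r ∈ bottRels n c, FreeGroup.lift f r = 1 := by
      rintro r ⟨p', q', hlt, rfl⟩
      rcases eq_or_ne q' q with rfl | hq'ne
      · rcases eq_or_ne (c (p', q')) 0 with hc | hc
        · have hfp' : f p' = 1 := by
            simp only [hf, if_neg hlt.ne]
            rw [if_neg]; rintro ⟨-, h1⟩; rw [hc] at h1; exact one_ne_zero h1.symm
          rw [if_pos hc]
          simp [map_mul, map_inv, FreeGroup.lift_apply_of, hfp', hfq]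
        · have hfp' : f p' = .sr 0 := by
            simp only [hf, if_neg hlt.ne]
            exact if_pos ⟨hlt, key _ hc⟩
          rw [if_neg hc]
          simp only [map_mul, map_inv, FreeGroup.lift_apply_of, hfp', hfq]
          decide
      · rcases eq_or_ne p' q with rfl | hp'ne
        · have hc : c (p', q') = 0 := by
            by_contra hc
            exact absurd (hqmax ⟨p', hlt, key _ hc⟩ hlt.le) (not_le.2 hlt)
          have hfq' : f q' = 1 := by
            simp only [hf, if_neg hq'ne]
            rw [if_neg]; rintro ⟨h1, -⟩; exact absurd h1 (not_lt.2 hlt.le)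
          rw [if_pos hc]
          simp [map_mul, map_inv, FreeGroup.lift_apply_of, hfq']
        · have hx : f p' = .sr 0 ∨ f p' = 1 := by
            simp only [hf, if_neg hp'ne]; split_ifs <;> simp
          have hy : f q' = .sr 0 ∨ f q' = 1 := by
            simp only [hf, if_neg hq'ne]; split_ifs <;> simp
          split_ifs <;>
            simp only [map_mul, map_inv, FreeGroup.lift_apply_of] <;>
            rcases hx with hx | hx <;> rcases hy with hy | hy <;>
            rw [hx, hy] <;> first | decide | (group; decide) | group
    have hcomm := hab (PresentedGroup.of p) (PresentedGroup.of q)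
    have := congrArg (PresentedGroup.toGroup hrel) hcomm
    simp only [map_mul, PresentedGroup.toGroup.of, hfp, hfq] at this
    exact absurd this (by decide)
  · intro h a b
    have hgen : ∀ p q : Fin n,
        Commute (PresentedGroup.of (rels := bottRels n c) p) (PresentedGroup.of q) := by
      have key : ∀ p q : Fin n, p < q →
          Commute (PresentedGroup.of (rels := bottRels n c) p) (PresentedGroup.of q) := by
        intro p q hpq
        have hr : (FreeGroup.of p * FreeGroup.of q * (FreeGroup.of p)⁻¹ * (FreeGroup.of q)⁻¹)
            ∈ bottRels n c := ⟨p, q, hpq, by rw [if_pos (h p q hpq)]⟩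
        have h1 : PresentedGroup.mk (bottRels n c)
            (FreeGroup.of p * FreeGroup.of q * (FreeGroup.of p)⁻¹ * (FreeGroup.of q)⁻¹) = 1 :=
          (QuotientGroup.eq_one_iff _).2 (Subgroup.subset_normalClosure hr)
        simp only [map_mul, map_inv] at h1
        rw [← commutatorElement_eq_one_iff_commute, commutatorElement_def]
        exact h1
      intro p q
      rcases lt_trichotomy p q with hpq | rfl | hqp
      · exact key p q hpq
      · exact Commute.refl _
      · exact (key q p hqp).symm
    have main : ∀ x y : FreeGroup (Fin n),
        Commute (PresentedGroup.mk (bottRels n c) x) (PresentedGroup.mk (bottRels n c) y) := by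
      intro x
      refine FreeGroup.induction_on x ?_ ?_ ?_ ?_
      · intro y; simp only [map_one]; exact Commute.one_left _
      · intro p y
        refine FreeGroup.induction_on y ?_ ?_ ?_ ?_
        · simp only [map_one]; exact Commute.one_right _
        · intro q; exact hgen p q
        · intro q hq; simpa only [map_inv] using hq.inv_right
        · intro y z hy hz; simpa only [map_mul] using hy.mul_right hz
      · intro x hx y; simpa only [map_inv] using (hx y).inv_left
      · intro x z hx hz y; simpa only [map_mul] using (hx y).mul_left (hz y)
    obtain ⟨x, rfl⟩ := PresentedGroup.mk_surjective (bottRels n c) a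
    obtain ⟨y, rfl⟩ := PresentedGroup.mk_surjective (bottRels n c) b
    exact main x y
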